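/- There exist constants c₁, c₂ > 0 and a function ℓ : ℕ → ℕ satisfying c₁·n/log n ≤ ℓ(n) ≤ c₂·n/log n for all sufficiently large n, such that if (L,M) is a random ℓ(n)-correspondence assignment for the complete graph K_n, then the probability that K_n is (L,M)-colorable tends to 1 as n → ∞. -/

import Mathlib

open Filter MeasureTheory

namespace RandomCorr

/-- A correspondence assignment for a graph `G`: a list assignment `L` together with,
for each edge, a partial matching between the colors of its endpoints,
encoded as a symmetric relation `M` supported on edges of `G`. -/
structure CorrAssignment {V : Type} (G : SimpleGraph V) where
  L : V → Finset ℕ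
  M : V → ℕ → V → ℕ → Prop
  symm : ∀ u i v j, M u i v j → M v j u i
  adj_of : ∀ u i v j, M u i v j → G.Adj u v
  mem_left : ∀ u i v j, M u i v j → i ∈ L u
  mem_right : ∀ u i v j, M u i v j → j ∈ L v
  matching : ∀ u i v j j', M u i v j → M u i v j' → j = j'

variable {V : Type}

/-- An `(L,M)`-coloring. -/
def CorrAssignment.IsColoring {G : SimpleGraph V} (C : CorrAssignment G) (φ : V → ℕ) : Prop :=
  (∀ v, φ v ∈ C.L v) ∧ ∀ u v, ¬ C.M u (φ u) v (φ v)

/-- `(L,M)` is an `ℓ`-correspondence assignment. -/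
def IsLAssignment {G : SimpleGraph V} (C : CorrAssignment G) (ℓ : ℕ) : Prop :=
  ∀ v, ℓ ≤ (C.L v).card

/-- The correspondence chromatic number of `G` is at most `ℓ`. -/
def corrChromAtMost (G : SimpleGraph V) (ℓ : ℕ) : Prop :=
  ∀ C : CorrAssignment G, IsLAssignment C ℓ → ∃ φ, C.IsColoring φ

/-- Maximum degree of a finite graph. -/
noncomputable def maxDeg [Fintype V] (G : SimpleGraph V) : ℕ :=
  Finset.univ.sup fun v => (G.neighborSet v).ncard

/-- `binom(n, ≤ b) = ∑_{i=0}^{⌊b⌋} binom(n,i)`. -/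
noncomputable def binomLe (n : ℕ) (b : ℝ) : ℕ :=
  ∑ i ∈ Finset.range (⌊b⌋₊ + 1), n.choose i

/-- The number of independent sets (including the empty set) of a subgraph `F`. -/
noncomputable def subIndepCount {W : Type} {H : SimpleGraph W} (F : H.Subgraph) : ℕ :=
  {S : Set W | S ⊆ F.verts ∧ ∀ a ∈ S, ∀ b ∈ S, ¬ F.Adj a b}.ncard

/-- A neighborhood subgraph: a subgraph whose vertex set is contained in the
neighborhood of some vertex. -/
def IsNbrSubgraph {W : Type} {H : SimpleGraph W} (F : H.Subgraph) : Prop :=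
  ∃ v, F.verts ⊆ H.neighborSet v

/-- `G` is `b`-IS-rich (with respect to maximum degree `Δ`): every `b`-large
neighborhood subgraph `F` satisfies `I(F) ≥ 2 · binom(|V(F)|, ≤ b)`. -/
def ISRich (G : SimpleGraph V) (b : ℝ) (Δ : ℕ) : Prop :=
  ∀ F : G.Subgraph, IsNbrSubgraph F →
    (Δ : ℝ) ^ ((1 : ℝ)/3) < (binomLe F.verts.ncard b : ℝ) →
    2 * binomLe F.verts.ncard b ≤ subIndepCount F

/-- The cover graph of a correspondence assignment. -/
def coverGraph {G : SimpleGraph V} (C : CorrAssignment G) : SimpleGraph (V × ℕ) where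
  Adj x y := C.M x.1 x.2 y.1 y.2
  symm := ⟨fun x y h => C.symm _ _ _ _ h⟩
  loopless := ⟨fun x h => (G.loopless.irrefl x.1) (C.adj_of _ _ _ _ h)⟩

/-- A correspondence assignment is `b`-IS-rich (with respect to `Δ`) if every `b`-large
neighborhood subgraph of its cover graph has at least `2 · binom(|V(F)|, ≤ b)`
independent sets. -/
def CorrAssignment.ISRich {G : SimpleGraph V} (C : CorrAssignment G) (b : ℝ) (Δ : ℕ) : Prop :=
  ∀ F : (coverGraph C).Subgraph, IsNbrSubgraph F →
    (Δ : ℝ) ^ ((1 : ℝ)/3) < (binomLe F.verts.ncard b : ℝ) →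
    2 * binomLe F.verts.ncard b ≤ subIndepCount F

/-- Bernoulli measure on `Bool` with success probability `p` (truncated to `[0,1]`). -/
noncomputable def bern (p : ℝ) : Measure Bool :=
  (PMF.bernoulli (min (Real.toNNReal p) 1) (min_le_right _ _)).toMeasure

/-- The Erdős–Rényi measure: each potential edge appears independently with
probability `p`. -/
noncomputable def erdosRenyi (n : ℕ) (p : ℝ) : Measure (Sym2 (Fin n) → Bool) :=
  Measure.pi fun _ => bern p

/-- The graph determined by an edge-indicator function. -/
def graphOf {n : ℕ} (ω : Sym2 (Fin n) → Bool) : SimpleGraph (Fin n) where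
  Adj u v := u ≠ v ∧ ω s(u, v) = true
  symm := ⟨by
    intro u v h
    refine ⟨h.1.symm, ?_⟩
    rw [Sym2.eq_swap]
    exact h.2⟩
  loopless := ⟨fun u h => h.1 rfl⟩

/-- `G` has a complete minor of order `k`. -/
def HasCompleteMinor (G : SimpleGraph V) (k : ℕ) : Prop :=
  ∃ B : Fin k → Set V,
    (∀ i, (B i).Nonempty) ∧
    (∀ i, (G.induce (B i)).Connected) ∧
    (∀ i j, i ≠ j → Disjoint (B i) (B j)) ∧
    (∀ i j, i ≠ j → ∃ u ∈ B i, ∃ v ∈ B j, G.Adj u v)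

/-- The Hadwiger number: the largest `k` such that `K_k` is a minor of `G`. -/
noncomputable def hadwigerNumber [Fintype V] (G : SimpleGraph V) : ℕ :=
  sSup {k | HasCompleteMinor G k}

/-- Independence number. -/
noncomputable def indepNum [Fintype V] (G : SimpleGraph V) : ℕ :=
  sSup {k | ∃ S : Finset V, S.card = k ∧ ∀ a ∈ S, ∀ b ∈ S, ¬ G.Adj a b}

/-- A partial `(L,M)`-coloring. -/
def IsPartialColoring {G : SimpleGraph V} (C : CorrAssignment G) (φ : V → Option ℕ) : Prop :=
  (∀ v c, φ v = some c → c ∈ C.L v) ∧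
  ∀ u v cu cv, φ u = some cu → φ v = some cv → ¬ C.M u cu v cv

/-- The number of colors available at `u` with respect to a partial coloring `φ`. -/
noncomputable def availCount {G : SimpleGraph V} (C : CorrAssignment G)
    (φ : V → Option ℕ) (u : V) : ℕ :=
  {c : ℕ | c ∈ C.L u ∧ ∀ v cv, φ v = some cv → ¬ C.M u c v cv}.ncard

/-- The event `A_u`: `u` is uncolored and fewer than `Δ^{7/12}` colors are available
at `u`. -/
def EventA {G : SimpleGraph V} (C : CorrAssignment G) (Δ : ℕ) (u : V)
    (φ : V → Option ℕ) : Prop :=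
  φ u = none ∧ (availCount C φ u : ℝ) < (Δ : ℝ) ^ ((7 : ℝ)/12)

/-- The number of independent sets of `F` of size at least `m`. -/
noncomputable def indepGeCount {W : Type} {H : SimpleGraph W} (F : H.Subgraph) (m : ℕ) : ℕ :=
  {S : Set W | S ⊆ F.verts ∧ (∀ a ∈ S, ∀ b ∈ S, ¬ F.Adj a b) ∧ m ≤ S.ncard}.ncard

/-- The median size `ᾱ(F)` of an independent set: the largest `m` such that at least
half of the independent sets of `F` have size at least `m`. -/
noncomputable def medianIndep {W : Type} {H : SimpleGraph W} (F : H.Subgraph) : ℕ :=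
  sSup {m : ℕ | subIndepCount F ≤ 2 * indepGeCount F m}

end RandomCorr

section AuxCGRCC
namespace CGRCC
open Finset

open Finset

variable {β : Type*} [Fintype β] [DecidableEq β]

/-- number of maps `Fin m → β` hitting every element of `S`. -/
def covC (m : ℕ) (S : Finset β) : ℕ :=
  (Finset.univ.filter fun f : Fin m → β => ∀ c ∈ S, ∃ i, f i = c).card

/-- number of maps hitting every element of `S` and avoiding `c`. -/
def covA (m : ℕ) (S : Finset β) (c : β) : ℕ :=
  (Finset.univ.filter fun f : Fin m → β => (∀ b ∈ S, ∃ i, f i = b) ∧ ∀ i, f i ≠ c).card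

lemma covC_empty (m : ℕ) : covC m (∅ : Finset β) = Fintype.card β ^ m := by
  simp [covC, Fintype.card_fun]

lemma key_inj (m : ℕ) (S : Finset β) (c : β) (hc : c ∉ S) :
    covC m S * (Fintype.card β - 1) ^ m ≤ covA m S c * Fintype.card β ^ m := by
  classical
  have hcard1 : Fintype.card {x : β // x ≠ c} = Fintype.card β - 1 := by
    have := Fintype.card_subtype_compl (fun x : β => x = c)
    simpa [Fintype.card_subtype_eq] using this
  -- domain and target products
  have h1 : covC m S * (Fintype.card β - 1) ^ m =
      ((Finset.univ.filter fun f : Fin m → β => ∀ b ∈ S, ∃ i, f i = b) ×ˢ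
        (Finset.univ : Finset (Fin m → {x : β // x ≠ c}))).card := by
    rw [Finset.card_product, Finset.card_univ, Fintype.card_fun, hcard1, Fintype.card_fin]
    rfl
  have h2 : covA m S c * Fintype.card β ^ m =
      ((Finset.univ.filter fun f : Fin m → β =>
          (∀ b ∈ S, ∃ i, f i = b) ∧ ∀ i, f i ≠ c) ×ˢ
        (Finset.univ : Finset (Fin m → β))).card := by
    rw [Finset.card_product, Finset.card_univ, Fintype.card_fun, Fintype.card_fin]
    rfl
  rw [h1, h2]
  apply Finset.card_le_card_of_injOn
    (fun p => (fun i => if p.1 i = c then (p.2 i).1 else p.1 i,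
               fun i => if p.1 i = c then c else (p.2 i).1))
  · rintro ⟨h, k⟩ hp
    simp only [Finset.mem_coe, Finset.mem_product, Finset.mem_filter, Finset.mem_univ, true_and] at hp ⊢
    refine ⟨⟨?_, ?_⟩, trivial⟩
    · intro b hb
      obtain ⟨i, hi⟩ := hp.1 b hb
      refine ⟨i, ?_⟩
      have hbc : h i ≠ c := by rw [hi]; intro h'; exact hc (h' ▸ hb)
      simp only [if_neg hbc]; exact hi
    · intro i
      by_cases hic : h i = c
      · simp only [if_pos hic]; exact (k i).2
      · simp only [if_neg hic]; exact hic
  · rintro ⟨h, k⟩ hp ⟨h', k'⟩ hp' heq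
    simp only [Prod.mk.injEq] at heq
    obtain ⟨hf, hg⟩ := heq
    have key : ∀ i, h i = h' i ∧ k i = k' i := by
      intro i
      have hfi := congrFun hf i
      have hgi := congrFun hg i
      by_cases h1 : h i = c <;> by_cases h2 : h' i = c
      · simp only [h1, h2, if_pos] at hfi
        exact ⟨h1.trans h2.symm, Subtype.ext hfi⟩
      · simp only [h1, h2, if_pos, if_neg, if_true, if_false] at hgi
        exact absurd hgi.symm (k' i).2
      · simp only [h1, h2, if_pos, if_neg] at hgi
        exact absurd hgi (k i).2
      · simp only [h1, h2, if_neg] at hfi hgi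
        exact ⟨hfi, Subtype.ext hgi⟩
    exact Prod.ext (funext fun i => (key i).1) (funext fun i => (key i).2)

lemma covC_insert (m : ℕ) (S : Finset β) (c : β) (hc : c ∉ S) :
    covC m (insert c S) + covA m S c = covC m S := by
  classical
  have h1 : (Finset.univ.filter fun f : Fin m → β => ∀ b ∈ insert c S, ∃ i, f i = b)
      = (Finset.univ.filter fun f : Fin m → β => ∀ b ∈ S, ∃ i, f i = b).filter
          (fun f => ∃ i, f i = c) := by
    rw [Finset.filter_filter]
    apply Finset.filter_congr
    intro f _
    constructor
    · intro hcov
      exact ⟨fun b hb => hcov b (Finset.mem_insert_of_mem hb), hcov c (Finset.mem_insert_self c S)⟩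
    · rintro ⟨hS, hc'⟩ b hb
      rcases Finset.mem_insert.mp hb with rfl | hb
      · exact hc'
      · exact hS b hb
  have h2 : (Finset.univ.filter fun f : Fin m → β =>
        (∀ b ∈ S, ∃ i, f i = b) ∧ ∀ i, f i ≠ c)
      = (Finset.univ.filter fun f : Fin m → β => ∀ b ∈ S, ∃ i, f i = b).filter
          (fun f => ¬ ∃ i, f i = c) := by
    rw [Finset.filter_filter]
    apply Finset.filter_congr
    intro f _
    simp [not_exists]
  rw [covC, covA, covC, h1, h2]
  exact Finset.card_filter_add_card_filter_not _

lemma covC_le (m : ℕ) (hβ : 1 ≤ Fintype.card β) (S : Finset β) :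
    (covC m S : ℝ) ≤ (Fintype.card β : ℝ) ^ m *
      (1 - ((Fintype.card β - 1 : ℝ) / Fintype.card β) ^ m) ^ S.card := by
  classical
  set b : ℕ := Fintype.card β with hb
  have hbpos : (0 : ℝ) < b := by exact_mod_cast hβ
  have hr0 : (0:ℝ) ≤ ((b:ℝ) - 1) / b := by
    apply div_nonneg _ hbpos.le
    have : (1:ℝ) ≤ b := by exact_mod_cast hβ
    linarith
  have hr1 : ((b:ℝ) - 1) / b ≤ 1 := by
    rw [div_le_one hbpos]; linarith
  induction S using Finset.induction_on with
  | empty => simp [covC_empty, hb]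
  | @insert c S hc IH =>
    have hA : (covC m S : ℝ) * (((b:ℝ) - 1) / b) ^ m ≤ covA m S c := by
      have := key_inj m S c hc
      have hcast : ((covC m S * (b - 1) ^ m : ℕ) : ℝ) ≤ ((covA m S c * b ^ m : ℕ) : ℝ) := by
        exact_mod_cast this
      push_cast at hcast
      have hbm : ((b - 1 : ℕ) : ℝ) = (b : ℝ) - 1 := by
        have : (1:ℕ) ≤ b := hβ
        push_cast [this]; ring
      rw [hbm] at hcast
      rw [div_pow, ← mul_div_assoc, div_le_iff₀ (by positivity)]
      linarith
    have hsplit : (covC m (insert c S) : ℝ) = covC m S - covA m S c := by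
      have h0 := covC_insert m S c hc
      have h0' : ((covC m (insert c S) : ℝ)) + covA m S c = covC m S := by exact_mod_cast h0
      linarith
    rw [hsplit, Finset.card_insert_of_notMem hc, pow_succ]
    have hstep : (covC m S : ℝ) - covA m S c ≤
        (covC m S : ℝ) * (1 - (((b:ℝ) - 1) / b) ^ m) := by
      nlinarith [hA]
    calc (covC m S : ℝ) - covA m S c ≤ (covC m S : ℝ) * (1 - (((b:ℝ)-1)/b)^m) := hstep
      _ ≤ (b:ℝ)^m * (1 - (((b:ℝ)-1)/b)^m)^S.card * (1 - (((b:ℝ)-1)/b)^m) := by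
          apply mul_le_mul_of_nonneg_right IH
          nlinarith [pow_le_one₀ hr0 hr1 (n := m)]
      _ = (b:ℝ)^m * ((1 - (((b:ℝ)-1)/b)^m)^S.card * (1 - (((b:ℝ)-1)/b)^m)) := by ring


open Finset

variable {ℓ : ℕ}

/-- the next greedy color, given list `L` of colors of vertices `0..v-1`. -/
noncomputable def nextC (hℓ : 0 < ℓ) (Sf : ℕ → ℕ → Equiv.Perm (Fin ℓ))
    (L : List (Fin ℓ)) (v : ℕ) : Fin ℓ :=
  let forb := (Finset.range v).image fun u => Sf u v (L.getD u ⟨0, hℓ⟩)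
  if h : (Finset.univ \ forb).Nonempty then h.choose else ⟨0, hℓ⟩

/-- the list of greedy colors of `0..v-1`. -/
noncomputable def greL (hℓ : 0 < ℓ) (Sf : ℕ → ℕ → Equiv.Perm (Fin ℓ)) : ℕ → List (Fin ℓ)
  | 0 => []
  | v+1 => greL hℓ Sf v ++ [nextC hℓ Sf (greL hℓ Sf v) v]

/-- greedy color of vertex `v`. -/
noncomputable def col (hℓ : 0 < ℓ) (Sf : ℕ → ℕ → Equiv.Perm (Fin ℓ)) (v : ℕ) : Fin ℓ :=
  nextC hℓ Sf (greL hℓ Sf v) v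

/-- forbidden set at vertex `v`. -/
noncomputable def forbS (hℓ : 0 < ℓ) (Sf : ℕ → ℕ → Equiv.Perm (Fin ℓ)) (v : ℕ) :
    Finset (Fin ℓ) :=
  (Finset.range v).image fun u => Sf u v (col hℓ Sf u)

lemma greL_length (hℓ : 0 < ℓ) (Sf) (v : ℕ) : (greL hℓ Sf v).length = v := by
  induction v with
  | zero => rfl
  | succ v ih => simp [greL, ih]

lemma greL_getD (hℓ : 0 < ℓ) (Sf) {u w : ℕ} (h : u < w) :
    (greL hℓ Sf w).getD u ⟨0, hℓ⟩ = col hℓ Sf u := by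
  induction w with
  | zero => omega
  | succ w ih =>
    rcases Nat.lt_succ_iff_lt_or_eq.mp h with h' | rfl
    · rw [greL, List.getD_append _ _ _ _ (by rw [greL_length]; exact h')]
      exact ih h'
    · rw [greL, List.getD_append_right _ _ _ _ (by rw [greL_length])]
      simp [greL_length, col]

lemma col_eq (hℓ : 0 < ℓ) (Sf) (v : ℕ) :
    col hℓ Sf v =
      if h : (Finset.univ \ forbS hℓ Sf v).Nonempty then h.choose else ⟨0, hℓ⟩ := by
  have : ((Finset.range v).image fun u => Sf u v ((greL hℓ Sf v).getD u ⟨0, hℓ⟩))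
      = forbS hℓ Sf v := by
    apply Finset.image_congr
    intro u hu
    simp only []
    rw [greL_getD hℓ Sf (Finset.mem_range.mp hu)]
  rw [col, nextC]
  simp only [this]

lemma col_not_mem_forbS (hℓ : 0 < ℓ) (Sf) (v : ℕ) (h : forbS hℓ Sf v ≠ Finset.univ) :
    col hℓ Sf v ∉ forbS hℓ Sf v := by
  have hne : (Finset.univ \ forbS hℓ Sf v).Nonempty := by
    rw [Finset.sdiff_nonempty]
    intro hsub
    exact h (Finset.univ_subset_iff.mp hsub)
  rw [col_eq, dif_pos hne]
  have := hne.choose_spec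
  exact (Finset.mem_sdiff.mp this).2

/-- locality: greedy colors depend only on `Sf a b` for `b` small. -/
lemma greL_congr (hℓ : 0 < ℓ) {Sf Sf' : ℕ → ℕ → Equiv.Perm (Fin ℓ)} (w : ℕ)
    (h : ∀ a b, b < w → Sf a b = Sf' a b) : greL hℓ Sf w = greL hℓ Sf' w := by
  induction w with
  | zero => rfl
  | succ w ih =>
    have hw : greL hℓ Sf w = greL hℓ Sf' w :=
      ih (fun a b hb => h a b (Nat.lt_succ_of_lt hb))
    rw [greL, greL, hw]
    congr 1
    rw [nextC, nextC]
    have : ((Finset.range w).image fun u => Sf u w ((greL hℓ Sf' w).getD u ⟨0, hℓ⟩))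
        = ((Finset.range w).image fun u => Sf' u w ((greL hℓ Sf' w).getD u ⟨0, hℓ⟩)) := by
      apply Finset.image_congr
      intro u _
      simp only []
      rw [h u w (Nat.lt_succ_self w)]
    simp only [this]

lemma col_congr (hℓ : 0 < ℓ) {Sf Sf' : ℕ → ℕ → Equiv.Perm (Fin ℓ)} (v : ℕ)
    (h : ∀ a b, b ≤ v → Sf a b = Sf' a b) : col hℓ Sf v = col hℓ Sf' v := by
  rw [col, col, greL_congr hℓ v (fun a b hb => h a b hb.le), nextC, nextC]
  have : ((Finset.range v).image fun u => Sf u v ((greL hℓ Sf' v).getD u ⟨0, hℓ⟩))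
      = ((Finset.range v).image fun u => Sf' u v ((greL hℓ Sf' v).getD u ⟨0, hℓ⟩)) := by
    apply Finset.image_congr
    intro u _
    simp only []
    rw [h u v le_rfl]
  simp only [this]


abbrev EdgT (n : ℕ) := {e : Fin n × Fin n // e.1 < e.2}
abbrev OmT (n ℓ : ℕ) := EdgT n → Equiv.Perm (Fin ℓ)

def toSf (n : ℕ) {ℓ : ℕ} (σ : OmT n ℓ) : ℕ → ℕ → Equiv.Perm (Fin ℓ) := fun a b =>
  if h : a < b ∧ b < n then σ ⟨(⟨a, h.1.trans h.2⟩, ⟨b, h.2⟩), Fin.mk_lt_mk.mpr h.1⟩ else 1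

variable {n ℓ : ℕ}

lemma toSf_apply (σ : OmT n ℓ) (e : EdgT n) :
    toSf n σ (e.1.1 : ℕ) (e.1.2 : ℕ) = σ e := by
  have h : ((e.1.1:ℕ) < (e.1.2:ℕ)) ∧ (e.1.2:ℕ) < n := ⟨Fin.lt_def.mp e.2, e.1.2.isLt⟩
  rw [toSf, dif_pos h]

lemma toSf_apply' (σ : OmT n ℓ) (e : EdgT n) {v : ℕ} (he : (e.1.2 : ℕ) = v) :
    toSf n σ (e.1.1 : ℕ) v = σ e := by
  subst he; exact toSf_apply σ e

lemma toSf_congr {σ σ' : OmT n ℓ} {v : ℕ}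
    (h : ∀ e : EdgT n, (e.1.2 : ℕ) ≠ v → σ e = σ' e) :
    ∀ a b, b ≠ v → toSf n σ a b = toSf n σ' a b := by
  intro a b hb
  rw [toSf, toSf]
  by_cases hab : a < b ∧ b < n
  · rw [dif_pos hab, dif_pos hab]
    exact h _ hb
  · rw [dif_neg hab, dif_neg hab]

lemma exists_coloring (hℓ : 0 < ℓ) (σ : OmT n ℓ)
    (hgood : ∀ v < n, forbS hℓ (toSf n σ) v ≠ Finset.univ) :
    ∃ φ : Fin n → Fin ℓ, ∀ e : EdgT n, σ e (φ e.1.1) ≠ φ e.1.2 := by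
  refine ⟨fun i => col hℓ (toSf n σ) (i : ℕ), ?_⟩
  intro e
  have hv : (e.1.2 : ℕ) < n := e.1.2.isLt
  have hmem : σ e (col hℓ (toSf n σ) (e.1.1 : ℕ)) ∈ forbS hℓ (toSf n σ) (e.1.2 : ℕ) := by
    rw [forbS]
    refine Finset.mem_image.mpr ⟨(e.1.1 : ℕ), Finset.mem_range.mpr (Fin.lt_def.mp e.2), ?_⟩
    rw [toSf_apply]
  have hnot := col_not_mem_forbS hℓ _ (e.1.2 : ℕ) (hgood _ hv)
  intro hcontra
  rw [hcontra] at hmem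
  exact hnot hmem

lemma bad_count (hℓ : 0 < ℓ) {v : ℕ} (hv : v < n) :
    (Finset.univ.filter fun σ : OmT n ℓ =>
        forbS hℓ (toSf n σ) v = Finset.univ).card * ℓ ^ v
      ≤ covC v (Finset.univ : Finset (Fin ℓ)) * Fintype.card (OmT n ℓ) := by
  have h1 : (Finset.univ.filter fun σ : OmT n ℓ =>
        forbS hℓ (toSf n σ) v = Finset.univ).card * ℓ ^ v
      = ((Finset.univ.filter fun σ : OmT n ℓ => forbS hℓ (toSf n σ) v = Finset.univ) ×ˢ
          (Finset.univ : Finset (Fin v → Fin ℓ))).card := by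
    rw [Finset.card_product, Finset.card_univ, Fintype.card_fun, Fintype.card_fin,
      Fintype.card_fin]
  have h2 : covC v (Finset.univ : Finset (Fin ℓ)) * Fintype.card (OmT n ℓ)
      = ((Finset.univ.filter fun f : Fin v → Fin ℓ =>
            ∀ c ∈ (Finset.univ : Finset (Fin ℓ)), ∃ i, f i = c) ×ˢ
          (Finset.univ : Finset (OmT n ℓ))).card := by
    rw [Finset.card_product, Finset.card_univ, covC]
    congr 2
    exact Finset.filter_congr_decidable _ _ _
  rw [h1, h2]
  apply Finset.card_le_card_of_injOn
    (fun p => ((fun u : Fin v => toSf n p.1 (u : ℕ) v (col hℓ (toSf n p.1) (u : ℕ))),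
      (fun e : EdgT n => if he : (e.1.2 : ℕ) = v then
          p.1 e * Equiv.swap (col hℓ (toSf n p.1) (e.1.1 : ℕ))
            (p.2 ⟨(e.1.1 : ℕ), lt_of_lt_of_eq (Fin.lt_def.mp e.2) he⟩)
        else p.1 e)))
  · rintro ⟨σ, g⟩ hp
    simp only [Finset.mem_coe, Finset.mem_product, Finset.mem_filter, Finset.mem_univ,
      true_and, and_true] at hp ⊢
    intro c _
    have hc : c ∈ forbS hℓ (toSf n σ) v := by rw [hp]; exact Finset.mem_univ c
    rw [forbS] at hc
    obtain ⟨u, hu, huc⟩ := Finset.mem_image.mp hc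
    exact ⟨⟨u, Finset.mem_range.mp hu⟩, huc⟩
  · rintro ⟨σ, g⟩ hp ⟨σ', g'⟩ hp' heq
    simp only [Prod.mk.injEq] at heq
    obtain ⟨hh, hw⟩ := heq
    -- step 1 : σ, σ' agree off the `v`-edges
    have hstep1 : ∀ e : EdgT n, (e.1.2 : ℕ) ≠ v → σ e = σ' e := by
      intro e he
      have := congrFun hw e
      simpa only [dif_neg he] using this
    -- step 2 : greedy colors agree below `v`
    have hcol : ∀ u : ℕ, u < v → col hℓ (toSf n σ) u = col hℓ (toSf n σ') u := by
      intro u hu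
      apply col_congr
      intro a b hb
      exact toSf_congr (v := v) hstep1 a b (Nat.ne_of_lt (lt_of_le_of_lt hb hu))
    -- step 3 : on the `v`-edges
    have hstep3 : ∀ (e : EdgT n) (he : (e.1.2 : ℕ) = v), σ e = σ' e ∧
        g ⟨(e.1.1 : ℕ), lt_of_lt_of_eq (Fin.lt_def.mp e.2) he⟩
          = g' ⟨(e.1.1 : ℕ), lt_of_lt_of_eq (Fin.lt_def.mp e.2) he⟩ := by
      intro e he
      have hu : (e.1.1 : ℕ) < v := lt_of_lt_of_eq (Fin.lt_def.mp e.2) he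
      set c := col hℓ (toSf n σ) (e.1.1 : ℕ) with hcdef
      have hc' : col hℓ (toSf n σ') (e.1.1 : ℕ) = c := (hcol _ hu).symm
      have hwe := congrFun hw e
      rw [dif_pos he, dif_pos he, hc'] at hwe
      -- value equality at c from hh
      have hval : σ e c = σ' e c := by
        have := congrFun hh ⟨(e.1.1 : ℕ), hu⟩
        simp only [] at this
        rw [show ((⟨(e.1.1 : ℕ), hu⟩ : Fin v) : ℕ) = (e.1.1 : ℕ) from rfl] at this
        rw [toSf_apply' σ e he, toSf_apply' σ' e he, hc'] at this
        exact this
      set a := g ⟨(e.1.1 : ℕ), hu⟩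
      set a' := g' ⟨(e.1.1 : ℕ), hu⟩
      have key : ∀ (π : Equiv.Perm (Fin ℓ)) (b : Fin ℓ),
          (π * Equiv.swap c b)⁻¹ (π c) = b := by
        intro π b
        rw [mul_inv_rev, Equiv.Perm.mul_apply, Equiv.Perm.inv_def π, Equiv.symm_apply_apply,
          Equiv.swap_inv, Equiv.swap_apply_left]
      have ha : a = a' := by
        have h1 := key (σ e) a
        have h2 := key (σ' e) a'
        rw [hwe, hval] at h1
        exact h1.symm.trans h2
      refine ⟨?_, ha⟩
      have : σ e * Equiv.swap c a = σ' e * Equiv.swap c a := by rw [hwe, ha]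
      exact mul_right_cancel this
    -- assemble
    have hσ : σ = σ' := by
      funext e
      by_cases he : (e.1.2 : ℕ) = v
      · exact (hstep3 e he).1
      · exact hstep1 e he
    have hg : g = g' := by
      funext u
      have hun : (u : ℕ) < n := lt_trans u.isLt hv
      set e : EdgT n := ⟨(⟨(u : ℕ), hun⟩, ⟨v, hv⟩), Fin.mk_lt_mk.mpr u.isLt⟩ with hedef
      have he : (e.1.2 : ℕ) = v := rfl
      have := (hstep3 e he).2
      simpa using this
    exact Prod.ext hσ hg

lemma bad_le_real (hℓ : 0 < ℓ) {v : ℕ} (hv : v < n) :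
    ((Finset.univ.filter fun σ : OmT n ℓ =>
        forbS hℓ (toSf n σ) v = Finset.univ).card : ℝ)
      ≤ Fintype.card (OmT n ℓ) * (1 - (1 - 1/(ℓ:ℝ))^n)^ℓ := by
  have hb := bad_count (n := n) hℓ hv
  have hℓR : (0:ℝ) < (ℓ:ℝ) := by exact_mod_cast hℓ
  have hdiv : 1/(ℓ:ℝ) ≤ 1 := by
    rw [div_le_one hℓR]; exact_mod_cast hℓ
  have hx0 : (0:ℝ) ≤ 1 - 1/(ℓ:ℝ) := by linarith
  have hx1 : 1 - 1/(ℓ:ℝ) ≤ 1 := by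
    have : (0:ℝ) ≤ 1/(ℓ:ℝ) := by positivity
    linarith
  have hcard : 1 ≤ Fintype.card (Fin ℓ) := by rw [Fintype.card_fin]; exact hℓ
  have hcov := covC_le (β := Fin ℓ) v hcard Finset.univ
  rw [Finset.card_univ, Fintype.card_fin] at hcov
  have hfr : ((ℓ:ℝ) - 1) / (ℓ:ℝ) = 1 - 1/(ℓ:ℝ) := by
    rw [sub_div, div_self (ne_of_gt hℓR)]
  rw [hfr] at hcov
  -- cast the counting inequality
  have hbR : ((Finset.univ.filter fun σ : OmT n ℓ =>
      forbS hℓ (toSf n σ) v = Finset.univ).card : ℝ) * (ℓ:ℝ)^v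
      ≤ (covC v (Finset.univ : Finset (Fin ℓ)) : ℝ) * Fintype.card (OmT n ℓ) := by
    exact_mod_cast hb
  have hmono : (1 - (1 - 1/(ℓ:ℝ))^v)^ℓ ≤ (1 - (1 - 1/(ℓ:ℝ))^n)^ℓ := by
    apply pow_le_pow_left₀
    · have := pow_le_one₀ hx0 hx1 (n := v); linarith
    · have := pow_le_pow_of_le_one hx0 hx1 hv.le
      linarith
  have hpow : (0:ℝ) < (ℓ:ℝ)^v := by positivity
  have : ((Finset.univ.filter fun σ : OmT n ℓ =>
      forbS hℓ (toSf n σ) v = Finset.univ).card : ℝ) * (ℓ:ℝ)^v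
      ≤ (Fintype.card (OmT n ℓ) * (1 - (1 - 1/(ℓ:ℝ))^n)^ℓ) * (ℓ:ℝ)^v := by
    calc ((Finset.univ.filter fun σ : OmT n ℓ =>
        forbS hℓ (toSf n σ) v = Finset.univ).card : ℝ) * (ℓ:ℝ)^v
        ≤ (covC v (Finset.univ : Finset (Fin ℓ)) : ℝ) * Fintype.card (OmT n ℓ) := hbR
      _ ≤ ((ℓ:ℝ)^v * (1 - (1 - 1/(ℓ:ℝ))^v)^ℓ) * Fintype.card (OmT n ℓ) := by
          apply mul_le_mul_of_nonneg_right hcov (by positivity)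
      _ ≤ ((ℓ:ℝ)^v * (1 - (1 - 1/(ℓ:ℝ))^n)^ℓ) * Fintype.card (OmT n ℓ) := by
          apply mul_le_mul_of_nonneg_right _ (by positivity)
          exact mul_le_mul_of_nonneg_left hmono (by positivity)
      _ = (Fintype.card (OmT n ℓ) * (1 - (1 - 1/(ℓ:ℝ))^n)^ℓ) * (ℓ:ℝ)^v := by ring
  exact le_of_mul_le_mul_right this hpow

lemma fail_le (hℓ : 0 < ℓ) :
    ((Finset.univ.filter fun σ : OmT n ℓ =>
        ¬ ∃ φ : Fin n → Fin ℓ, ∀ e : EdgT n, σ e (φ e.1.1) ≠ φ e.1.2).card : ℝ)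
      ≤ n * Fintype.card (OmT n ℓ) * (1 - (1 - 1/(ℓ:ℝ))^n)^ℓ := by
  classical
  have hsub : (Finset.univ.filter fun σ : OmT n ℓ =>
        ¬ ∃ φ : Fin n → Fin ℓ, ∀ e : EdgT n, σ e (φ e.1.1) ≠ φ e.1.2)
      ⊆ (Finset.range n).biUnion (fun v => Finset.univ.filter fun σ : OmT n ℓ =>
          forbS hℓ (toSf n σ) v = Finset.univ) := by
    intro σ hσ
    rw [Finset.mem_filter] at hσ
    by_contra hmem
    simp only [Finset.mem_biUnion, Finset.mem_range, Finset.mem_filter, Finset.mem_univ,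
      true_and, not_exists, not_and] at hmem
    exact hσ.2 (exists_coloring hℓ σ (fun v hv => hmem v hv))
  have hcard := Finset.card_le_card hsub
  have hcard2 := Finset.card_biUnion_le (s := Finset.range n)
    (t := fun v => Finset.univ.filter fun σ : OmT n ℓ =>
      forbS hℓ (toSf n σ) v = Finset.univ)
  have hchain : ((Finset.univ.filter fun σ : OmT n ℓ =>
      ¬ ∃ φ : Fin n → Fin ℓ, ∀ e : EdgT n, σ e (φ e.1.1) ≠ φ e.1.2).card : ℝ)
      ≤ ∑ v ∈ Finset.range n, ((Finset.univ.filter fun σ : OmT n ℓ =>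
          forbS hℓ (toSf n σ) v = Finset.univ).card : ℝ) := by
    push_cast
    exact_mod_cast le_trans hcard hcard2
  refine le_trans hchain ?_
  have : ∑ v ∈ Finset.range n, ((Finset.univ.filter fun σ : OmT n ℓ =>
      forbS hℓ (toSf n σ) v = Finset.univ).card : ℝ)
      ≤ ∑ v ∈ Finset.range n,
        (Fintype.card (OmT n ℓ) * (1 - (1 - 1/(ℓ:ℝ))^n)^ℓ : ℝ) := by
    apply Finset.sum_le_sum
    intro v hv
    exact bad_le_real hℓ (Finset.mem_range.mp hv)
  refine le_trans this ?_
  rw [Finset.sum_const, Finset.card_range, nsmul_eq_mul]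
  ring_nf
  exact le_refl _

lemma ratio_bounds (hℓ : 0 < ℓ) :
    1 - n * (1 - (1 - 1/(ℓ:ℝ))^n)^ℓ
        ≤ (Set.ncard {σ : OmT n ℓ | ∃ φ : Fin n → Fin ℓ,
            ∀ e : EdgT n, σ e (φ e.1.1) ≠ φ e.1.2} : ℝ) / Fintype.card (OmT n ℓ) ∧
      (Set.ncard {σ : OmT n ℓ | ∃ φ : Fin n → Fin ℓ,
            ∀ e : EdgT n, σ e (φ e.1.1) ≠ φ e.1.2} : ℝ) / Fintype.card (OmT n ℓ) ≤ 1 := by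
  classical
  have hKpos : 0 < Fintype.card (OmT n ℓ) := Fintype.card_pos
  have hK : (0:ℝ) < (Fintype.card (OmT n ℓ) : ℝ) := by exact_mod_cast hKpos
  have h1 : (Set.ncard {σ : OmT n ℓ | ∃ φ : Fin n → Fin ℓ,
      ∀ e : EdgT n, σ e (φ e.1.1) ≠ φ e.1.2})
      = ({σ : OmT n ℓ | ∃ φ : Fin n → Fin ℓ,
      ∀ e : EdgT n, σ e (φ e.1.1) ≠ φ e.1.2}.toFinset).card := Set.ncard_eq_toFinset_card' _
  rw [Set.toFinset_setOf] at h1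
  rw [h1]
  set B := (Finset.range n).biUnion (fun v =>
      Finset.univ.filter fun σ : OmT n ℓ => forbS hℓ (toSf n σ) v = Finset.univ) with hBdef
  constructor
  · rw [le_div_iff₀ hK]
    have hsub2 : Finset.univ \ B
        ⊆ Finset.univ.filter (fun σ : OmT n ℓ => ∃ φ : Fin n → Fin ℓ,
            ∀ e : EdgT n, σ e (φ e.1.1) ≠ φ e.1.2) := by
      intro σ hσ
      rw [Finset.mem_sdiff] at hσ
      rw [Finset.mem_filter]
      refine ⟨Finset.mem_univ σ, ?_⟩
      apply exists_coloring hℓ σ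
      intro v hv hforb
      exact hσ.2 (Finset.mem_biUnion.mpr ⟨v, Finset.mem_range.mpr hv,
        Finset.mem_filter.mpr ⟨Finset.mem_univ σ, hforb⟩⟩)
    have hc1 := Finset.card_le_card hsub2
    rw [Finset.card_sdiff_of_subset (Finset.subset_univ _), Finset.card_univ] at hc1
    have hBle : B.card ≤ Fintype.card (OmT n ℓ) := by
      calc B.card ≤ Finset.univ.card := Finset.card_le_card (Finset.subset_univ _)
        _ = _ := Finset.card_univ
    have hc1R : ((Fintype.card (OmT n ℓ) : ℝ)) - B.card
        ≤ ((Finset.univ.filter (fun σ : OmT n ℓ => ∃ φ : Fin n → Fin ℓ,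
            ∀ e : EdgT n, σ e (φ e.1.1) ≠ φ e.1.2)).card : ℝ) := by
      have := (Nat.cast_le (α := ℝ)).mpr hc1
      rw [Nat.cast_sub hBle] at this
      exact this
    have hBR : (B.card : ℝ) ≤ n * (Fintype.card (OmT n ℓ) * (1 - (1 - 1/(ℓ:ℝ))^n)^ℓ) := by
      have hb1 : (B.card : ℝ) ≤ ∑ v ∈ Finset.range n,
          ((Finset.univ.filter fun σ : OmT n ℓ =>
            forbS hℓ (toSf n σ) v = Finset.univ).card : ℝ) := by
        exact_mod_cast Finset.card_biUnion_le
      refine le_trans hb1 ?_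
      have hb2 : ∑ v ∈ Finset.range n, ((Finset.univ.filter fun σ : OmT n ℓ =>
            forbS hℓ (toSf n σ) v = Finset.univ).card : ℝ)
          ≤ ∑ _v ∈ Finset.range n,
            ((Fintype.card (OmT n ℓ) : ℝ) * (1 - (1 - 1/(ℓ:ℝ))^n)^ℓ) :=
        Finset.sum_le_sum fun v hv => bad_le_real hℓ (Finset.mem_range.mp hv)
      refine le_trans hb2 ?_
      rw [Finset.sum_const, Finset.card_range, nsmul_eq_mul]
    calc (1 - n * (1 - (1 - 1/(ℓ:ℝ))^n)^ℓ) * (Fintype.card (OmT n ℓ) : ℝ)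
        = (Fintype.card (OmT n ℓ) : ℝ)
            - n * ((Fintype.card (OmT n ℓ) : ℝ) * (1 - (1 - 1/(ℓ:ℝ))^n)^ℓ) := by ring
      _ ≤ (Fintype.card (OmT n ℓ) : ℝ) - B.card := by linarith
      _ ≤ _ := hc1R
  · rw [div_le_one hK]
    exact_mod_cast (Finset.card_filter_le _ _).trans (le_of_eq Finset.card_univ)

noncomputable def lfun (n : ℕ) : ℕ := max 1 ⌈(3:ℝ) * n / Real.log n⌉₊

lemma lfun_pos (n : ℕ) : 0 < lfun n := le_max_left 1 _

noncomputable def Bn (n : ℕ) : ℝ := n * (1 - (1 - 1/(lfun n:ℝ))^n)^(lfun n)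

lemma Bn_nonneg (n : ℕ) : 0 ≤ Bn n := by
  have hL1 : (1:ℝ) ≤ (lfun n : ℝ) := by exact_mod_cast lfun_pos n
  have h0 : (0:ℝ) ≤ 1 - 1/(lfun n:ℝ) := by
    have : 1/(lfun n:ℝ) ≤ 1 := by
      rw [div_le_one (by linarith)]; exact hL1
    linarith
  have h1 : 1 - 1/(lfun n:ℝ) ≤ 1 := by
    have : (0:ℝ) ≤ 1/(lfun n:ℝ) := by positivity
    linarith
  have := pow_le_one₀ h0 h1 (n := n)
  have hn : (0:ℝ) ≤ (n:ℝ) := Nat.cast_nonneg n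
  apply mul_nonneg hn
  apply pow_nonneg
  linarith

lemma exp_aux {t : ℝ} (h0 : 0 ≤ t) (h2 : t ≤ 1/2) : Real.exp (-(2*t)) ≤ 1 - t := by
  have h1 : 1 + 2*t ≤ Real.exp (2*t) := by
    have := Real.add_one_le_exp (2*t); linarith
  have hexp : (0:ℝ) < Real.exp (2*t) := Real.exp_pos _
  have ha : 1 ≤ (1-t)*(1+2*t) := by nlinarith
  have hb : (1-t)*(1+2*t) ≤ (1-t)*Real.exp (2*t) :=
    mul_le_mul_of_nonneg_left h1 (by linarith)
  rw [Real.exp_neg, inv_eq_one_div, div_le_iff₀ hexp]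
  nlinarith

lemma Bn_le (n : ℕ) (hn3 : 3 ≤ n) (hn : 486 ≤ Real.log n) : Bn n ≤ 1/(n:ℝ) := by
  have hnpos : (0:ℝ) < n := by exact_mod_cast Nat.lt_of_lt_of_le (by norm_num) hn3
  have hlogpos : (0:ℝ) < Real.log n := lt_of_lt_of_le (by norm_num) hn
  have hlog_le : Real.log n ≤ n := Real.log_le_self hnpos.le
  set L : ℝ := (lfun n : ℝ) with hLdef
  have hL3 : 3*(n:ℝ)/Real.log n ≤ L := by
    refine le_trans (Nat.le_ceil _) ?_
    rw [hLdef]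
    show _ ≤ ((max 1 ⌈(3:ℝ) * n / Real.log n⌉₊ : ℕ) : ℝ)
    have := le_max_right 1 ⌈(3:ℝ) * n / Real.log n⌉₊
    exact_mod_cast this
  have hL2 : (2:ℝ) ≤ L := by
    refine le_trans ?_ hL3
    rw [le_div_iff₀ hlogpos]
    linarith
  have hLpos : (0:ℝ) < L := by linarith
  have ht2 : 1/L ≤ 1/2 := by
    rw [div_le_div_iff₀ hLpos (by norm_num)]
    linarith
  have htpos : (0:ℝ) ≤ 1/L := by positivity
  have hq : Real.exp (-(2*(1/L))) ≤ 1 - 1/L := exp_aux htpos ht2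
  have hp3 : Real.exp (-(2*(n:ℝ)/L)) ≤ (1 - 1/L)^n := by
    have heq : -(2*(n:ℝ)/L) = n * (-(2*(1/L))) := by ring
    rw [heq, Real.exp_nat_mul]
    exact pow_le_pow_left₀ (Real.exp_pos _).le hq n
  have h3n : 3*(n:ℝ) ≤ L * Real.log n := by
    rw [div_le_iff₀ hlogpos] at hL3
    exact hL3
  have hp4 : -((2/3) * Real.log n) ≤ -(2*(n:ℝ)/L) := by
    rw [neg_le_neg_iff, div_le_iff₀ hLpos]
    nlinarith
  set q : ℝ := Real.exp (-((2/3)*Real.log n)) with hqdef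
  have hq2 : q ≤ (1 - 1/L)^n := le_trans (Real.exp_le_exp.mpr hp4) hp3
  have hqpos : 0 < q := Real.exp_pos _
  have h0L : (0:ℝ) ≤ 1 - 1/L := by linarith [ht2]
  have h1L : 1 - 1/L ≤ 1 := by linarith [htpos]
  have hbase0 : (0:ℝ) ≤ 1 - (1 - 1/L)^n := by
    have := pow_le_one₀ h0L h1L (n := n); linarith
  have hbase : 1 - (1 - 1/L)^n ≤ Real.exp (-q) := by
    have := Real.add_one_le_exp (-q)
    linarith
  have hQ : (1 - (1 - 1/L)^n)^(lfun n) ≤ Real.exp (-(L * q)) := by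
    calc (1 - (1 - 1/L)^n)^(lfun n) ≤ (Real.exp (-q))^(lfun n) :=
          pow_le_pow_left₀ hbase0 hbase _
      _ = Real.exp ((lfun n) * (-q)) := (Real.exp_nat_mul _ _).symm
      _ = Real.exp (-(L * q)) := by rw [hLdef]; ring_nf
  -- n * q = exp((1/3) log n)
  have hnq : (n:ℝ) * q = Real.exp ((1/3)*Real.log n) := by
    conv_lhs => rw [show (n:ℝ) = Real.exp (Real.log n) from (Real.exp_log hnpos).symm]
    rw [← Real.exp_add]
    congr 1
    ring
  -- cubic lower bound for exp
  have hcube : (Real.log n / 9)^3 ≤ Real.exp ((1/3)*Real.log n) := by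
    have hu : (0:ℝ) ≤ (1/3)*Real.log n / 3 := by positivity
    have h1 : (1/3)*Real.log n/3 ≤ Real.exp ((1/3)*Real.log n/3) := by
      have := Real.add_one_le_exp ((1/3)*Real.log n/3); linarith
    have h2 : ((1/3)*Real.log n/3)^3 ≤ (Real.exp ((1/3)*Real.log n/3))^3 :=
      pow_le_pow_left₀ hu h1 3
    have h3 : (Real.exp ((1/3)*Real.log n/3))^3 = Real.exp ((1/3)*Real.log n) := by
      rw [← Real.exp_nat_mul]
      congr 1
      push_cast
      ring
    calc (Real.log n / 9)^3 = ((1/3)*Real.log n/3)^3 := by ring_nf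
      _ ≤ _ := h2.trans_eq h3
  have hLq : 2 * Real.log n ≤ L * q := by
    have hstep : (3*(n:ℝ)/Real.log n) * q ≤ L * q :=
      mul_le_mul_of_nonneg_right hL3 hqpos.le
    refine le_trans ?_ hstep
    have : (3*(n:ℝ)/Real.log n) * q = 3 * ((n:ℝ)*q) / Real.log n := by ring
    rw [this, hnq, le_div_iff₀ hlogpos]
    have hc : (Real.log n/9)^3 ≤ Real.exp ((1/3)*Real.log n) := hcube
    have key : 2 * Real.log n * Real.log n ≤ 3 * ((Real.log n/9)^3) := by
      nlinarith [mul_nonneg (mul_nonneg hlogpos.le hlogpos.le)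
        (show (0:ℝ) ≤ Real.log n - 486 by linarith)]
    linarith
  have hexp2 : Real.exp (-(2*Real.log n)) = 1/(n:ℝ)^2 := by
    rw [Real.exp_neg, inv_eq_one_div]
    congr 1
    rw [show (2:ℝ)*Real.log n = Real.log n + Real.log n by ring, Real.exp_add,
      Real.exp_log hnpos]
    ring
  have hfinal : Bn n ≤ (n:ℝ) * (1/(n:ℝ)^2) := by
    rw [Bn, ← hexp2]
    apply mul_le_mul_of_nonneg_left _ hnpos.le
    refine hQ.trans (Real.exp_le_exp.mpr ?_)
    linarith
  refine hfinal.trans_eq ?_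
  field_simp

lemma Bn_tendsto : Filter.Tendsto Bn Filter.atTop (nhds 0) := by
  apply squeeze_zero' (Filter.Eventually.of_forall Bn_nonneg)
  · have hlog : Filter.Tendsto (fun n : ℕ => Real.log n) Filter.atTop Filter.atTop :=
      Real.tendsto_log_atTop.comp tendsto_natCast_atTop_atTop
    filter_upwards [Filter.eventually_ge_atTop 3, hlog.eventually_ge_atTop 486] with n hn3 hn
    exact Bn_le n hn3 hn
  · exact tendsto_one_div_atTop_nhds_zero_nat

lemma lfun_bounds : ∀ᶠ n : ℕ in Filter.atTop,
    3 * (n:ℝ) / Real.log n ≤ (lfun n : ℝ) ∧ (lfun n : ℝ) ≤ 4 * (n:ℝ) / Real.log n := by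
  have hlog : Filter.Tendsto (fun n : ℕ => Real.log n) Filter.atTop Filter.atTop :=
    Real.tendsto_log_atTop.comp tendsto_natCast_atTop_atTop
  filter_upwards [Filter.eventually_ge_atTop 3, hlog.eventually_ge_atTop 1] with n hn3 hlog1
  have hnpos : (0:ℝ) < n := by exact_mod_cast Nat.lt_of_lt_of_le (by norm_num) hn3
  have hlogpos : (0:ℝ) < Real.log n := lt_of_lt_of_le one_pos hlog1
  have hlog_le : Real.log n ≤ n := Real.log_le_self hnpos.le
  have hxpos : (0:ℝ) < 3 * (n:ℝ) / Real.log n := by positivity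
  have hL3 : 3*(n:ℝ)/Real.log n ≤ (lfun n : ℝ) := by
    refine le_trans (Nat.le_ceil _) ?_
    show _ ≤ ((max 1 ⌈(3:ℝ) * n / Real.log n⌉₊ : ℕ) : ℝ)
    have := le_max_right 1 ⌈(3:ℝ) * n / Real.log n⌉₊
    exact_mod_cast this
  refine ⟨hL3, ?_⟩
  have hmax : lfun n = ⌈(3:ℝ) * n / Real.log n⌉₊ :=
    max_eq_right (Nat.one_le_iff_ne_zero.mpr (Nat.pos_iff_ne_zero.mp (Nat.ceil_pos.mpr hxpos)))
  rw [hmax]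
  have hceil : (⌈(3:ℝ) * n / Real.log n⌉₊ : ℝ) < 3 * (n:ℝ) / Real.log n + 1 :=
    Nat.ceil_lt_add_one hxpos.le
  have hdiv1 : (1:ℝ) ≤ (n:ℝ)/Real.log n := by
    rw [le_div_iff₀ hlogpos]; linarith
  have : 4*(n:ℝ)/Real.log n = 3*(n:ℝ)/Real.log n + (n:ℝ)/Real.log n := by ring
  linarith

end CGRCC


end AuxCGRCC

/-- There is `ℓ(n) = Θ(n / log n)` such that `K_n` is a.a.s. colorable
from a random `ℓ(n)`-correspondence assignment (each edge gets an independent uniformly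
random perfect matching of the color lists `{1,…,ℓ(n)}`, here encoded by a permutation). -/
theorem complete_graph_random_correspondence_colorable :
    ∃ c₁ c₂ : ℝ, 0 < c₁ ∧ 0 < c₂ ∧ ∃ ℓ : ℕ → ℕ,
      (∀ᶠ n : ℕ in Filter.atTop,
        c₁ * n / Real.log n ≤ (ℓ n : ℝ) ∧ (ℓ n : ℝ) ≤ c₂ * n / Real.log n) ∧
      Filter.Tendsto
        (fun n : ℕ =>
          (Set.ncard {σ : {e : Fin n × Fin n // e.1 < e.2} → Equiv.Perm (Fin (ℓ n)) |
              ∃ φ : Fin n → Fin (ℓ n),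
                ∀ e : {e : Fin n × Fin n // e.1 < e.2}, σ e (φ e.1.1) ≠ φ e.1.2} : ℝ) /
            (Fintype.card ({e : Fin n × Fin n // e.1 < e.2} → Equiv.Perm (Fin (ℓ n))) : ℝ))
        Filter.atTop (nhds 1) := by
  refine ⟨3, 4, by norm_num, by norm_num, CGRCC.lfun, CGRCC.lfun_bounds, ?_⟩
  have hbounds : ∀ n : ℕ,
      1 - CGRCC.Bn n ≤
        (Set.ncard {σ : {e : Fin n × Fin n // e.1 < e.2} → Equiv.Perm (Fin (CGRCC.lfun n)) |
            ∃ φ : Fin n → Fin (CGRCC.lfun n),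
              ∀ e : {e : Fin n × Fin n // e.1 < e.2}, σ e (φ e.1.1) ≠ φ e.1.2} : ℝ) /
          (Fintype.card ({e : Fin n × Fin n // e.1 < e.2} →
            Equiv.Perm (Fin (CGRCC.lfun n))) : ℝ) ∧
      (Set.ncard {σ : {e : Fin n × Fin n // e.1 < e.2} → Equiv.Perm (Fin (CGRCC.lfun n)) |
            ∃ φ : Fin n → Fin (CGRCC.lfun n),
              ∀ e : {e : Fin n × Fin n // e.1 < e.2}, σ e (φ e.1.1) ≠ φ e.1.2} : ℝ) /
          (Fintype.card ({e : Fin n × Fin n // e.1 < e.2} →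
            Equiv.Perm (Fin (CGRCC.lfun n))) : ℝ) ≤ 1 := by
    intro n
    exact CGRCC.ratio_bounds (CGRCC.lfun_pos n)
  have hlow : Filter.Tendsto (fun n : ℕ => 1 - CGRCC.Bn n) Filter.atTop (nhds 1) := by
    have := tendsto_const_nhds (x := (1:ℝ)) (f := Filter.atTop (α := ℕ)) |>.sub CGRCC.Bn_tendsto
    simpa using this
  refine tendsto_of_tendsto_of_tendsto_of_le_of_le hlow tendsto_const_nhds
    (fun n => (hbounds n).1) (fun n => (hbounds n).2)
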